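/- For d = 4, define the 12 product basis labels from the arrays U_{jk}=k, V = [[1,2,3,4],[2,1,4,3],[3,4,1,2],[4,3,2,1]], W = [[1,2,3,4],[4,3,2,1],[2,1,4,3],[3,4,1,2]], and set |Φ_j⟩ = (1/2) Σ_{k=1}^{4} |k⟩|V_{jk}⟩|W_{jk}⟩ ∈ (ℂ^4)^{⊗3}. Then for any α,β,γ,δ ∈ ℂ with |α|^2+|β|^2+|γ|^2+|δ|^2 = 1, the state α|Φ_1⟩+β|Φ_2⟩+γ|Φ_3⟩+δ|Φ_4⟩ has all three single-party reduced density matrices equal to I_4/4. -/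

import Mathlib

private lemma fin4_mk0 (h : 0 < 4) : (⟨0, h⟩ : Fin 4) = 0 := rfl
private lemma fin4_mk1 (h : 1 < 4) : (⟨1, h⟩ : Fin 4) = 1 := rfl
private lemma fin4_mk2 (h : 2 < 4) : (⟨2, h⟩ : Fin 4) = 2 := rfl
private lemma fin4_mk3 (h : 3 < 4) : (⟨3, h⟩ : Fin 4) = 3 := rfl

set_option maxHeartbeats 2000000 in
/-- The explicit `d = 4` Latin-square masking scheme.  With the mutually
orthogonal Latin squares `V, W` below (symbols `1,…,4` written as `Fin 4`) and
`|Φ_j⟩ = (1/2) ∑ k |k⟩|V_{jk}⟩|W_{jk}⟩ ∈ (ℂ⁴)^{⊗3}`, every state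
`α|Φ₁⟩+β|Φ₂⟩+γ|Φ₃⟩+δ|Φ₄⟩` with `|α|²+|β|²+|γ|²+|δ|² = 1` has all three
single-party reduced density matrices equal to `I₄/4`. -/
theorem stmt_16 (α β γ δ : ℂ) (h : ‖α‖ ^ 2 + ‖β‖ ^ 2 + ‖γ‖ ^ 2 + ‖δ‖ ^ 2 = 1)
    (V W : Fin 4 → Fin 4 → Fin 4)
    (hV : V = fun j k => !![(0 : Fin 4), 1, 2, 3; 1, 0, 3, 2; 2, 3, 0, 1; 3, 2, 1, 0] j k)
    (hW : W = fun j k => !![(0 : Fin 4), 1, 2, 3; 3, 2, 1, 0; 1, 0, 3, 2; 2, 3, 0, 1] j k)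
    (Φj : Fin 4 → Fin 4 × Fin 4 × Fin 4 → ℂ)
    (hΦj : ∀ (j : Fin 4) (t : Fin 4 × Fin 4 × Fin 4),
      Φj j t = if V j t.1 = t.2.1 ∧ W j t.1 = t.2.2 then (1 / 2 : ℂ) else 0)
    (Φ : Fin 4 × Fin 4 × Fin 4 → ℂ)
    (hΦ : ∀ t, Φ t = α * Φj 0 t + β * Φj 1 t + γ * Φj 2 t + δ * Φj 3 t) :
    (∀ x x' : Fin 4, (∑ b : Fin 4, ∑ c : Fin 4, Φ (x, b, c) * star (Φ (x', b, c)))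
        = if x = x' then (1 / 4 : ℂ) else 0) ∧
    (∀ x x' : Fin 4, (∑ a : Fin 4, ∑ c : Fin 4, Φ (a, x, c) * star (Φ (a, x', c)))
        = if x = x' then (1 / 4 : ℂ) else 0) ∧
    (∀ x x' : Fin 4, (∑ a : Fin 4, ∑ b : Fin 4, Φ (a, b, x) * star (Φ (a, b, x')))
        = if x = x' then (1 / 4 : ℂ) else 0) := by
  subst hV hW
  have h1 : α * star α + β * star β + γ * star γ + δ * star δ = 1 := by
    simp only [Complex.star_def, Complex.mul_conj]
    norm_cast
    simpa [Complex.normSq_eq_norm_sq] using h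
  simp only [Complex.star_def] at h1
  refine ⟨?_, ?_, ?_⟩ <;> intro x x' <;> fin_cases x <;> fin_cases x' <;>
    · simp only [fin4_mk0, fin4_mk1, fin4_mk2, fin4_mk3, hΦ, hΦj, Fin.sum_univ_four]
      norm_num [Matrix.of_apply, Matrix.cons_val', Matrix.cons_val_two, Matrix.cons_val_three, Matrix.cons_val_four, Matrix.tail_cons, Matrix.cons_val_zero, Matrix.cons_val_one, Matrix.head_cons, Matrix.head_fin_const,
        show (2:Fin 4) ≠ 0 by decide, show (3:Fin 4) ≠ 0 by decide, show (1:Fin 4) ≠ 0 by decide,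
        show (2:Fin 4) ≠ 1 by decide, show (3:Fin 4) ≠ 1 by decide, show (0:Fin 4) ≠ 1 by decide,
        show (2:Fin 4) ≠ 3 by decide, show (1:Fin 4) ≠ 3 by decide, show (0:Fin 4) ≠ 3 by decide,
        show (3:Fin 4) ≠ 2 by decide, show (1:Fin 4) ≠ 2 by decide, show (0:Fin 4) ≠ 2 by decide,
        Complex.star_def]
      try linear_combination h1 / 4
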